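/- Let X be a locally convex space and f a proper convex lsc function on X with maximal monotone subdifferential ∂f. Then f = f^∪ and f* = f^{*∪}; equivalently, f(x) = sup{⟨x, a*⟩ − f*(a*) : a* ∈ R(∂f)} for all x, and f*(x*) = sup{⟨x*, a⟩ − f(a) : a ∈ D(∂f)} for all x*. -/

import Mathlib

open scoped Topology

section Defs

variable {X : Type*} [AddCommGroup X] [Module ℝ X] [TopologicalSpace X]

/-- `p ∈ ∂f(x)`: `f x` is finite and `f y ≥ f x + ⟨y - x, p⟩` for all `y`. -/
def IsSubgrad (f : X → EReal) (x : X) (p : X →L[ℝ] ℝ) : Prop :=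
  f x ≠ ⊤ ∧ f x ≠ ⊥ ∧ ∀ y, f x + (p (y - x) : EReal) ≤ f y

/-- Graph of the convex subdifferential of `f`. -/
def graphSub (f : X → EReal) : Set (X × (X →L[ℝ] ℝ)) :=
  {q | IsSubgrad f q.1 q.2}

/-- Domain `D(∂f)` of the subdifferential. -/
def subdiffDom (f : X → EReal) : Set X := {x | ∃ p, IsSubgrad f x p}

/-- Range `R(∂f)` of the subdifferential. -/
def subdiffRan (f : X → EReal) : Set (X →L[ℝ] ℝ) := {p | ∃ x, IsSubgrad f x p}

/-- Monotone subset of `X × X*`. -/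
def MonotoneSet (S : Set (X × (X →L[ℝ] ℝ))) : Prop :=
  ∀ a ∈ S, ∀ b ∈ S, 0 ≤ a.2 (a.1 - b.1) - b.2 (a.1 - b.1)

/-- Maximal monotone subset of `X × X*` (maximal w.r.t. graph inclusion). -/
def MaxMonotoneSet (S : Set (X × (X →L[ℝ] ℝ))) : Prop :=
  MonotoneSet S ∧ ∀ T, MonotoneSet T → S ⊆ T → T = S

/-- Proper function: never `−∞` and not identically `+∞`. -/
def ProperE {Y : Type*} (f : Y → EReal) : Prop :=
  (∃ x, f x ≠ ⊤) ∧ ∀ x, f x ≠ ⊥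

/-- Convexity of an extended-real-valued function via its epigraph. -/
def ConvexEpi (f : X → EReal) : Prop :=
  Convex ℝ {q : X × ℝ | f q.1 ≤ (q.2 : EReal)}

/-- The lsc convex hull: the greatest lsc convex function majorized by `f`. -/
noncomputable def lscConvHull (f : X → EReal) : X → EReal := fun x =>
  sSup {v | ∃ g : X → EReal, ConvexEpi g ∧ LowerSemicontinuous g ∧ g ≤ f ∧ v = g x}

/-- Convex conjugate w.r.t. the dual system `(X, X*)`. -/
noncomputable def conjE (f : X → EReal) (p : X →L[ℝ] ℝ) : EReal :=
  ⨆ x, ((p x : EReal) - f x)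

/-- Biconjugate `f**`. -/
noncomputable def biconjE (f : X → EReal) (x : X) : EReal :=
  ⨆ p : X →L[ℝ] ℝ, ((p x : EReal) - conjE f p)

/-- Fitzpatrick function of `∂f`. -/
noncomputable def fitzSub (f : X → EReal) (x : X) (p : X →L[ℝ] ℝ) : EReal :=
  ⨆ a, ⨆ s, ⨆ _ : IsSubgrad f a s, ((s (x - a) + p a : ℝ) : EReal)

/-- Upper envelope `f^∪(x) = sup{⟨x−a, a*⟩ + f(a) : (a,a*) ∈ Graph ∂f}`. -/
noncomputable def upperEnv (f : X → EReal) (x : X) : EReal :=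
  ⨆ a, ⨆ s, ⨆ _ : IsSubgrad f a s, ((s (x - a) : EReal) + f a)

end Defs


section Aux

variable {X : Type*} [AddCommGroup X] [Module ℝ X] [TopologicalSpace X]

lemma IsSubgrad.coe_toReal' {f : X → EReal} {a : X} {s : X →L[ℝ] ℝ} (h : IsSubgrad f a s) :
    f a = (((f a).toReal : ℝ) : EReal) := (EReal.coe_toReal h.1 h.2.1).symm

lemma IsSubgrad.real_ineq {f : X → EReal} {a : X} {s : X →L[ℝ] ℝ} (h : IsSubgrad f a s)
    {y : X} {r : ℝ} (hy : f y = (r : EReal)) : (f a).toReal + s (y - a) ≤ r := by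
  have h2 := h.2.2 y
  rw [hy, h.coe_toReal', ← EReal.coe_add, EReal.coe_le_coe_iff] at h2
  exact h2

lemma IsSubgrad.ne_bot {f : X → EReal} {a : X} {s : X →L[ℝ] ℝ} (h : IsSubgrad f a s)
    (y : X) : f y ≠ ⊥ := by
  intro hb
  have h2 := h.2.2 y
  rw [hb, h.coe_toReal', ← EReal.coe_add, le_bot_iff] at h2
  exact EReal.coe_ne_bot _ h2

lemma conjE_of_subgrad {f : X → EReal} {a : X} {s : X →L[ℝ] ℝ} (h : IsSubgrad f a s) :
    conjE f s = ((s a - (f a).toReal : ℝ) : EReal) := by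
  refine le_antisymm (iSup_le fun y => ?_) ?_
  · rcases eq_or_ne (f y) ⊤ with hy | hy
    · rw [hy, sub_eq_add_neg]; simp
    · have hr : f y = (((f y).toReal : ℝ) : EReal) := (EReal.coe_toReal hy (h.ne_bot y)).symm
      have h1 := h.real_ineq hr
      rw [map_sub] at h1
      rw [hr, ← EReal.coe_sub, EReal.coe_le_coe_iff]
      linarith
  · refine le_iSup_of_le a (le_of_eq ?_)
    obtain ⟨r, hr, hr2⟩ : ∃ r : ℝ, f a = (r : EReal) ∧ (f a).toReal = r :=
      ⟨(f a).toReal, h.coe_toReal', rfl⟩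
    rw [hr2, hr, ← EReal.coe_sub]

lemma monotone_graphSub (f : X → EReal) : MonotoneSet (graphSub f) := by
  rintro ⟨a, s⟩ ha ⟨b, t⟩ hb
  simp only [graphSub, Set.mem_setOf_eq] at ha hb
  have h1 := ha.real_ineq hb.coe_toReal'
  have h2 := hb.real_ineq ha.coe_toReal'
  dsimp only
  rw [map_sub, map_sub] at *
  linarith

lemma graphSub_nonempty {f : X → EReal} (hmax : MaxMonotoneSet (graphSub f)) :
    (graphSub f).Nonempty := by
  by_contra h
  rw [Set.not_nonempty_iff_eq_empty] at h
  have hmono : MonotoneSet ({((0 : X), (0 : X →L[ℝ] ℝ))} : Set (X × (X →L[ℝ] ℝ))) := by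
    rintro a ha b hb
    rw [Set.mem_singleton_iff] at ha hb
    subst ha; subst hb; simp
  have h2 := hmax.2 _ hmono (by rw [h]; exact Set.empty_subset _)
  rw [h] at h2
  exact (Set.singleton_ne_empty _) h2

lemma mem_of_related {f : X → EReal} (hmax : MaxMonotoneSet (graphSub f))
    {x : X} {p : X →L[ℝ] ℝ}
    (h : ∀ q ∈ graphSub f, 0 ≤ p (x - q.1) - q.2 (x - q.1)) : IsSubgrad f x p := by
  have hmono : MonotoneSet (insert (x, p) (graphSub f)) := by
    rintro a ha b hb
    rcases Set.mem_insert_iff.1 ha with rfl | ha <;> rcases Set.mem_insert_iff.1 hb with rfl | hb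
    · simp
    · exact h _ hb
    · have h2 := h _ ha
      have e : a.1 - x = -(x - a.1) := (neg_sub _ _).symm
      dsimp only at *
      rw [e, map_neg, map_neg]
      linarith
    · exact hmax.1 a ha b hb
  have h2 := hmax.2 _ hmono (Set.subset_insert _ _)
  have h3 : (x, p) ∈ graphSub f := h2 ▸ Set.mem_insert _ _
  exact h3

end Aux

section Aux2

variable {X : Type*} [AddCommGroup X] [Module ℝ X] [TopologicalSpace X]

lemma pairing_le_f_add {f : X → EReal} (hmax : MaxMonotoneSet (graphSub f))
    (x : X) (p : X →L[ℝ] ℝ) :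
    (p x : EReal) ≤ f x + ⨆ a, ⨆ _ : a ∈ subdiffDom f, ((p a : EReal) - f a) := by
  set ψ := ⨆ a, ⨆ _ : a ∈ subdiffDom f, ((p a : EReal) - f a) with hψ
  by_cases hrel : ∀ q ∈ graphSub f, 0 ≤ p (x - q.1) - q.2 (x - q.1)
  · have hx := mem_of_related hmax hrel
    obtain ⟨r, hr, _⟩ : ∃ r : ℝ, f x = (r : EReal) ∧ (f x).toReal = r := ⟨_, hx.coe_toReal', rfl⟩
    have h1 : ((p x - r : ℝ) : EReal) ≤ ψ := by
      refine le_iSup_of_le x ?_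
      refine le_iSup_of_le ⟨p, hx⟩ ?_
      rw [hr, ← EReal.coe_sub]
    calc (p x : EReal) = ((r : ℝ) : EReal) + ((p x - r : ℝ) : EReal) := by
          rw [← EReal.coe_add]; exact_mod_cast (by ring : p x = r + (p x - r))
      _ ≤ f x + ψ := by rw [hr]; exact add_le_add le_rfl h1
  · push_neg at hrel
    obtain ⟨⟨a, s⟩, hq, hlt⟩ := hrel
    simp only [graphSub, Set.mem_setOf_eq] at hq
    obtain ⟨r, hr, _⟩ : ∃ r : ℝ, f a = (r : EReal) ∧ (f a).toReal = r := ⟨_, hq.coe_toReal', rfl⟩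
    dsimp only at hlt
    have e1 : p (x - a) = p x - p a := map_sub _ _ _
    have h1 : ((r + s (x - a) : ℝ) : EReal) ≤ f x := by
      have h2 := hq.2.2 x
      rw [hr, ← EReal.coe_add] at h2
      exact h2
    have h2 : ((p a - r : ℝ) : EReal) ≤ ψ := by
      refine le_iSup_of_le a ?_
      refine le_iSup_of_le ⟨s, hq⟩ ?_
      rw [hr, ← EReal.coe_sub]
    calc (p x : EReal) ≤ ((r + s (x - a) : ℝ) : EReal) + ((p a - r : ℝ) : EReal) := by
          rw [← EReal.coe_add]
          exact_mod_cast (by linarith : p x ≤ (r + s (x - a)) + (p a - r))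
      _ ≤ f x + ψ := add_le_add h1 h2

lemma pairing_le_G_add {f : X → EReal} (hmax : MaxMonotoneSet (graphSub f))
    (x : X) (p : X →L[ℝ] ℝ) :
    (p x : EReal) ≤ (⨆ q, ⨆ _ : q ∈ subdiffRan f, ((q x : EReal) - conjE f q))
      + ⨆ a, ⨆ _ : a ∈ subdiffDom f, ((p a : EReal) - f a) := by
  set G := ⨆ q, ⨆ _ : q ∈ subdiffRan f, ((q x : EReal) - conjE f q) with hG
  set ψ := ⨆ a, ⨆ _ : a ∈ subdiffDom f, ((p a : EReal) - f a) with hψ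
  by_cases hrel : ∀ q ∈ graphSub f, 0 ≤ p (x - q.1) - q.2 (x - q.1)
  · have hx := mem_of_related hmax hrel
    obtain ⟨r, hr, hr2⟩ : ∃ r : ℝ, f x = (r : EReal) ∧ (f x).toReal = r := ⟨_, hx.coe_toReal', rfl⟩
    have hcj : conjE f p = ((p x - r : ℝ) : EReal) := by rw [conjE_of_subgrad hx, hr2]
    have h1 : ((r : ℝ) : EReal) ≤ G := by
      refine le_iSup_of_le p ?_
      refine le_iSup_of_le ⟨x, hx⟩ ?_
      rw [hcj, ← EReal.coe_sub]
      exact_mod_cast le_of_eq (by ring : r = p x - (p x - r))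
    have h2 : ((p x - r : ℝ) : EReal) ≤ ψ := by
      refine le_iSup_of_le x ?_
      refine le_iSup_of_le ⟨p, hx⟩ ?_
      rw [hr, ← EReal.coe_sub]
    calc (p x : EReal) = ((r : ℝ) : EReal) + ((p x - r : ℝ) : EReal) := by
          rw [← EReal.coe_add]; exact_mod_cast (by ring : p x = r + (p x - r))
      _ ≤ G + ψ := add_le_add h1 h2
  · push_neg at hrel
    obtain ⟨⟨a, s⟩, hq, hlt⟩ := hrel
    simp only [graphSub, Set.mem_setOf_eq] at hq
    obtain ⟨r, hr, hr2⟩ : ∃ r : ℝ, f a = (r : EReal) ∧ (f a).toReal = r := ⟨_, hq.coe_toReal', rfl⟩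
    dsimp only at hlt
    have e1 : p (x - a) = p x - p a := map_sub _ _ _
    have e2 : s (x - a) = s x - s a := map_sub _ _ _
    have hcj : conjE f s = ((s a - r : ℝ) : EReal) := by rw [conjE_of_subgrad hq, hr2]
    have h1 : ((s x - (s a - r) : ℝ) : EReal) ≤ G := by
      refine le_iSup_of_le s ?_
      refine le_iSup_of_le ⟨a, hq⟩ ?_
      rw [hcj, ← EReal.coe_sub]
    have h2 : ((p a - r : ℝ) : EReal) ≤ ψ := by
      refine le_iSup_of_le a ?_
      refine le_iSup_of_le ⟨s, hq⟩ ?_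
      rw [hr, ← EReal.coe_sub]
    calc (p x : EReal) ≤ ((s x - (s a - r) : ℝ) : EReal) + ((p a - r : ℝ) : EReal) := by
          rw [← EReal.coe_add]
          exact_mod_cast (by linarith : p x ≤ (s x - (s a - r)) + (p a - r))
      _ ≤ G + ψ := add_le_add h1 h2

end Aux2

section Aux3

variable {X : Type*} [AddCommGroup X] [Module ℝ X] [TopologicalSpace X]

lemma ereal_le_of_forall_real_lt {A B : EReal} (h : ∀ c : ℝ, (c : EReal) < A → (c : EReal) ≤ B) :
    A ≤ B := by
  by_contra hAB
  push_neg at hAB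
  obtain ⟨c, hc1, hc2⟩ := EReal.exists_between_coe_real hAB
  exact absurd (h c hc2) (not_le.2 hc1)

lemma isClosed_epi {f : X → EReal} (hlsc : LowerSemicontinuous f) :
    IsClosed {q : X × ℝ | f q.1 ≤ (q.2 : EReal)} := by
  rw [← isOpen_compl_iff, isOpen_iff_mem_nhds]
  rintro ⟨x, t⟩ h
  simp only [Set.mem_compl_iff, Set.mem_setOf_eq, not_le] at h
  obtain ⟨r, hr1, hr2⟩ := EReal.exists_between_coe_real h
  have hx : ∀ᶠ y in 𝓝 x, (r : EReal) < f y := hlsc x r hr2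
  have ht : Set.Iio r ∈ 𝓝 t := Iio_mem_nhds (by exact_mod_cast hr1)
  rw [nhds_prod_eq]
  filter_upwards [Filter.prod_mem_prod hx ht] with q hq
  simp only [Set.mem_compl_iff, Set.mem_setOf_eq, not_le]
  exact lt_trans (by exact_mod_cast hq.2) hq.1

variable [IsTopologicalAddGroup X] [ContinuousSMul ℝ X] [LocallyConvexSpace ℝ X]

lemma exists_affine_minorant {f : X → EReal} (hconv : ConvexEpi f)
    (hlsc : LowerSemicontinuous f) {a₀ : X} {s₀ : X →L[ℝ] ℝ} (h₀ : IsSubgrad f a₀ s₀)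
    {x₀ : X} {c : ℝ} (hc : (c : EReal) < f x₀) :
    ∃ p : X →L[ℝ] ℝ, ∀ x, ((c + (p x - p x₀) : ℝ) : EReal) ≤ f x := by
  have hne : ((x₀, c) : X × ℝ) ∉ {q : X × ℝ | f q.1 ≤ (q.2 : EReal)} := by
    simp only [Set.mem_setOf_eq, not_le]
    exact hc
  obtain ⟨L, u, hLx, hLepi⟩ := geometric_hahn_banach_point_closed hconv (isClosed_epi hlsc) hne
  set m : X →L[ℝ] ℝ := L.comp (ContinuousLinearMap.inl ℝ X ℝ) with hm
  set β : ℝ := L (0, 1) with hβdef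
  have hdec : ∀ (x : X) (t : ℝ), L (x, t) = m x + t * β := by
    intro x t
    have e : ((x, t) : X × ℝ) = (x, 0) + t • ((0 : X), (1 : ℝ)) := by
      simp [Prod.ext_iff]
    rw [e, map_add, map_smul, smul_eq_mul]
    rfl
  obtain ⟨t₀, ht₀, _⟩ : ∃ r : ℝ, f a₀ = (r : EReal) ∧ (f a₀).toReal = r := ⟨_, h₀.coe_toReal', rfl⟩
  have hmem₀ : ∀ t : ℝ, t₀ ≤ t → ((a₀, t) : X × ℝ) ∈ {q : X × ℝ | f q.1 ≤ (q.2 : EReal)} := by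
    intro t ht
    simp only [Set.mem_setOf_eq, ht₀]
    exact_mod_cast ht
  have hβ : 0 ≤ β := by
    by_contra hβneg
    push_neg at hβneg
    set t := max t₀ ((u - m a₀) / β + 1) with htdef
    have h1 := hLepi _ (hmem₀ t (le_max_left _ _))
    rw [hdec] at h1
    have ht : (u - m a₀) / β + 1 ≤ t := le_max_right _ _
    nlinarith [mul_le_mul_of_nonpos_right ht (le_of_lt hβneg),
      div_mul_cancel₀ (u - m a₀) (ne_of_lt hβneg)]
  rcases eq_or_lt_of_le hβ with hβ0 | hβpos
  · -- vertical separation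
    have hdom : ∀ y : X, ∀ r : ℝ, f y = (r : EReal) → u < m y := by
      intro y r hy
      have h2 := hLepi (y, r) (by simp only [Set.mem_setOf_eq, hy, le_refl])
      rw [hdec, ← hβ0] at h2
      linarith
    have hx₀ : m x₀ < u := by
      have h2 := hLx
      rw [hdec, ← hβ0] at h2
      linarith
    set lam := max 0 ((c - (s₀ x₀ - s₀ a₀ + t₀)) / (u - m x₀)) with hlamdef
    refine ⟨s₀ - lam • m, fun x => ?_⟩
    rcases eq_or_ne (f x) ⊤ with hx | hx
    · rw [hx]; exact le_top
    · obtain ⟨r, hr, _⟩ : ∃ r : ℝ, f x = (r : EReal) ∧ (f x).toReal = r :=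
        ⟨_, (EReal.coe_toReal hx (h₀.ne_bot x)).symm, rfl⟩
      rw [hr, EReal.coe_le_coe_iff]
      have h1 : t₀ + (s₀ x - s₀ a₀) ≤ r := by
        have h2 := h₀.real_ineq hr
        rw [map_sub] at h2
        linarith [h2, (by rw [ht₀]; rfl : (f a₀).toReal = t₀)]
      have h2 : u < m x := hdom x r hr
      have hlam0 : 0 ≤ lam := le_max_left _ _
      have hlam : (c - (s₀ x₀ - s₀ a₀ + t₀)) / (u - m x₀) ≤ lam := le_max_right _ _
      have hu : 0 < u - m x₀ := by linarith
      have h3 : c - (s₀ x₀ - s₀ a₀ + t₀) ≤ lam * (u - m x₀) := by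
        rw [div_le_iff₀ hu] at hlam
        linarith
      simp only [ContinuousLinearMap.sub_apply, ContinuousLinearMap.smul_apply, smul_eq_mul]
      nlinarith [mul_nonneg hlam0 (le_of_lt (sub_pos.2 h2))]
  · -- nonvertical separation
    refine ⟨(-β⁻¹) • m, fun x => ?_⟩
    rcases eq_or_ne (f x) ⊤ with hx | hx
    · rw [hx]; exact le_top
    · obtain ⟨r, hr, _⟩ : ∃ r : ℝ, f x = (r : EReal) ∧ (f x).toReal = r :=
        ⟨_, (EReal.coe_toReal hx (h₀.ne_bot x)).symm, rfl⟩
      rw [hr, EReal.coe_le_coe_iff]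
      have h2 : u < m x + r * β := by
        have h3 := hLepi (x, r) (by simp only [Set.mem_setOf_eq, hr, le_refl])
        rwa [hdec] at h3
      have h1 : m x₀ + c * β < u := by
        have h3 := hLx
        rwa [hdec] at h3
      have h2' : (u - m x) / β < r := by rw [div_lt_iff₀ hβpos]; linarith
      have h1' : c < (u - m x₀) / β := by rw [lt_div_iff₀ hβpos]; linarith
      have e : (u - m x) / β - (u - m x₀) / β = β⁻¹ * m x₀ - β⁻¹ * m x := by
        field_simp
        ring
      simp only [ContinuousLinearMap.smul_apply, smul_eq_mul]
      linarith
end Aux3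

section Aux4

variable {X : Type*} [AddCommGroup X] [Module ℝ X] [TopologicalSpace X]
variable [IsTopologicalAddGroup X] [ContinuousSMul ℝ X] [LocallyConvexSpace ℝ X]

lemma le_biconj {f : X → EReal} (hconv : ConvexEpi f) (hlsc : LowerSemicontinuous f)
    {a₀ : X} {s₀ : X →L[ℝ] ℝ} (h₀ : IsSubgrad f a₀ s₀) (x₀ : X) :
    f x₀ ≤ ⨆ p : X →L[ℝ] ℝ, ((p x₀ : EReal) - conjE f p) := by
  refine ereal_le_of_forall_real_lt fun c hc => ?_
  obtain ⟨p, hp⟩ := exists_affine_minorant hconv hlsc h₀ hc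
  have hconj : conjE f p ≤ ((p x₀ - c : ℝ) : EReal) := by
    refine iSup_le fun y => ?_
    rcases eq_or_ne (f y) ⊤ with hy | hy
    · rw [hy, sub_eq_add_neg]; simp
    · obtain ⟨r, hr, _⟩ : ∃ r : ℝ, f y = (r : EReal) ∧ (f y).toReal = r :=
        ⟨_, (EReal.coe_toReal hy (h₀.ne_bot y)).symm, rfl⟩
      have h2 := hp y
      rw [hr, EReal.coe_le_coe_iff] at h2
      rw [hr, ← EReal.coe_sub, EReal.coe_le_coe_iff]
      linarith
  refine le_iSup_of_le p ?_
  calc ((c : ℝ) : EReal) = ((p x₀ : ℝ) : EReal) - ((p x₀ - c : ℝ) : EReal) := by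
        rw [← EReal.coe_sub]; exact_mod_cast (by ring : c = p x₀ - (p x₀ - c))
    _ ≤ (p x₀ : EReal) - conjE f p := EReal.sub_le_sub le_rfl hconj

end Aux4

theorem maxMonotone_implies_upper_envelopes {X : Type*} [AddCommGroup X] [Module ℝ X] [TopologicalSpace X]
    [IsTopologicalAddGroup X] [ContinuousSMul ℝ X] [LocallyConvexSpace ℝ X] [T2Space X]
    (f : X → EReal) (hproper : ProperE f) (hconv : ConvexEpi f)
    (hlsc : LowerSemicontinuous f)
    (hmax : MaxMonotoneSet (graphSub f)) :
    (∀ x, f x = ⨆ p, ⨆ _ : p ∈ subdiffRan f, ((p x : EReal) - conjE f p)) ∧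
      (∀ p : X →L[ℝ] ℝ, conjE f p = ⨆ a, ⨆ _ : a ∈ subdiffDom f, ((p a : EReal) - f a)) := by
  obtain ⟨⟨a₀, s₀⟩, h₀'⟩ := graphSub_nonempty hmax
  have h₀ : IsSubgrad f a₀ s₀ := h₀'
  obtain ⟨t₀, ht₀, _⟩ : ∃ r : ℝ, f a₀ = (r : EReal) ∧ (f a₀).toReal = r := ⟨_, h₀.coe_toReal', rfl⟩
  have hpsi_le : ∀ p : X →L[ℝ] ℝ,
      (⨆ a, ⨆ _ : a ∈ subdiffDom f, ((p a : EReal) - f a)) ≤ conjE f p :=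
    fun p => iSup_le fun a => iSup_le fun _ => le_iSup (fun y => ((p y : EReal) - f y)) a
  have hpsi_bot : ∀ p : X →L[ℝ] ℝ,
      ((p a₀ - t₀ : ℝ) : EReal) ≤ ⨆ a, ⨆ _ : a ∈ subdiffDom f, ((p a : EReal) - f a) := by
    intro p
    refine le_iSup_of_le a₀ ?_
    refine le_iSup_of_le ⟨s₀, h₀⟩ ?_
    rw [ht₀, ← EReal.coe_sub]
  constructor
  · intro x
    set G := ⨆ p, ⨆ _ : p ∈ subdiffRan f, ((p x : EReal) - conjE f p) with hGdef
    refine le_antisymm ?_ ?_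
    · refine le_trans (le_biconj hconv hlsc h₀ x) (iSup_le fun p => ?_)
      set ψ := ⨆ a, ⨆ _ : a ∈ subdiffDom f, ((p a : EReal) - f a) with hψdef
      have hpl := hpsi_le p
      rw [← hψdef] at hpl
      rcases eq_or_ne ψ ⊤ with hψt | hψt
      · have hct : conjE f p = ⊤ := top_le_iff.1 (hψt ▸ hpl)
        rw [hct, sub_eq_add_neg]
        simp
      · have hpb := hpsi_bot p
        rw [← hψdef] at hpb
        have hψb : ψ ≠ ⊥ := by
          intro h
          rw [h, le_bot_iff] at hpb
          exact EReal.coe_ne_bot _ hpb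
        obtain ⟨ρ, hρ⟩ : ∃ ρ : ℝ, ψ = (ρ : EReal) := ⟨_, (EReal.coe_toReal hψt hψb).symm⟩
        have hkey := pairing_le_G_add hmax x p
        rw [← hψdef, ← hGdef, hρ] at hkey
        have h2 : (p x : EReal) - conjE f p ≤ (p x : EReal) - ψ :=
          EReal.sub_le_sub le_rfl hpl
        refine le_trans h2 ?_
        rw [hρ]
        refine (EReal.sub_le_iff_le_add (Or.inl (EReal.coe_ne_bot ρ))
          (Or.inl (EReal.coe_ne_top ρ))).2 hkey
    · refine iSup_le fun s => iSup_le fun hs => ?_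
      obtain ⟨a, ha⟩ := hs
      obtain ⟨ra, hra, hra2⟩ : ∃ r : ℝ, f a = (r : EReal) ∧ (f a).toReal = r :=
        ⟨_, ha.coe_toReal', rfl⟩
      have hcj : conjE f s = ((s a - ra : ℝ) : EReal) := by rw [conjE_of_subgrad ha, hra2]
      have h1 := ha.2.2 x
      rw [hra, ← EReal.coe_add] at h1
      rw [hcj, ← EReal.coe_sub]
      refine le_trans (le_of_eq ?_) h1
      exact_mod_cast (by rw [map_sub]; ring : s x - (s a - ra) = ra + s (x - a))
  · intro p
    refine le_antisymm ?_ (hpsi_le p)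
    set ψ := ⨆ a, ⨆ _ : a ∈ subdiffDom f, ((p a : EReal) - f a) with hψdef
    rw [show conjE f p = ⨆ x, ((p x : EReal) - f x) from rfl]
    refine iSup_le fun x => ?_
    rcases eq_or_ne (f x) ⊤ with hx | hx
    · rw [hx, sub_eq_add_neg]
      simp
    · obtain ⟨r, hr, _⟩ : ∃ r : ℝ, f x = (r : EReal) ∧ (f x).toReal = r :=
        ⟨_, (EReal.coe_toReal hx (hproper.2 x)).symm, rfl⟩
      have hkey := pairing_le_f_add hmax x p
      rw [← hψdef, hr] at hkey
      have hkey' : (p x : EReal) ≤ ψ + (r : EReal) := by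
        rwa [add_comm ((r : ℝ) : EReal) ψ] at hkey
      rw [hr]
      exact (EReal.sub_le_iff_le_add (Or.inl (EReal.coe_ne_bot r))
        (Or.inl (EReal.coe_ne_top r))).2 hkey'
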